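/- Let G = (V,E) be a weighted multigraph with |V| = n vertices and capacities {b_v}, in which the number of parallel edges between any two vertices u and v is at most min(b_u, b_v), and let M_G be a maximum-weight b-matching of G. Then the total number of edges of G satisfies |E| ≤ 2n·|M_G|, where |M_G| is the number of edges of M_G. -/

import Mathlib

open scoped Classical

/-- A weighted multigraph edge: two endpoints and an integer weight. -/
abbrev MEdge (V : Type*) := V × V × ℕ

variable {V : Type*}

/-- Weight of an edge. -/
def ewt (e : MEdge V) : ℕ := e.2.2

/-- Degree of a vertex in a multiset of edges: number of incident edges. -/
noncomputable def mdeg (H : Multiset (MEdge V)) (v : V) : ℕ :=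
  (H.filter (fun e => e.1 = v ∨ e.2.1 = v)).card

/-- Weighted degree of a vertex in a multiset of edges. -/
noncomputable def mwdeg (H : Multiset (MEdge V)) (v : V) : ℕ :=
  ((H.filter (fun e => e.1 = v ∨ e.2.1 = v)).map ewt).sum

/-- Total weight of a multiset of edges. -/
def mwt (M : Multiset (MEdge V)) : ℕ := (M.map ewt).sum

/-- A multiset of edges is valid (for weight bound `W`): no self-loops and
integer weights in `{1, ..., W}`. -/
def ValidEdges (W : ℕ) (E : Multiset (MEdge V)) : Prop :=
  ∀ e ∈ E, e.1 ≠ e.2.1 ∧ 1 ≤ ewt e ∧ ewt e ≤ W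

/-- The multiset of parallel edges between `u` and `v`. -/
noncomputable def par (E : Multiset (MEdge V)) (u v : V) : Multiset (MEdge V) :=
  E.filter (fun e => (e.1 = u ∧ e.2.1 = v) ∨ (e.1 = v ∧ e.2.1 = u))

/-- `M` is a `b`-matching contained in the (multi-)graph `E`. -/
def IsBMatching (E M : Multiset (MEdge V)) (b : V → ℕ) : Prop :=
  M ≤ E ∧ ∀ v, mdeg M v ≤ b v

/-- `H` is a `(β, βm)`-w-b-EDCS of the multigraph `E` with capacities `b`. -/
def IsWBEDCS (E H : Multiset (MEdge V)) (b : V → ℕ) (β βm : ℕ) : Prop :=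
  H ≤ E ∧
  (∀ e ∈ H,
    (mwdeg H e.1 : ℝ) / (b e.1) + (mwdeg H e.2.1 : ℝ) / (b e.2.1) ≤ (β : ℝ) * ewt e) ∧
  (∀ e ∈ E - H,
    (βm : ℝ) * ewt e ≤ (mwdeg H e.1 : ℝ) / (b e.1) + (mwdeg H e.2.1 : ℝ) / (b e.2.1))

lemma card_le_sum_filter {α β : Type*} (S : Finset β) (p : β → α → Prop)
    (T : Multiset α) (h : ∀ e ∈ T, ∃ v ∈ S, p v e) :
    T.card ≤ ∑ v ∈ S, (T.filter (p v)).card := by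
  induction T using Multiset.induction with
  | empty => simp
  | cons a T ih =>
    obtain ⟨v0, hv0S, hv0⟩ := h a (Multiset.mem_cons_self a T)
    have hT := ih (fun e he => h e (Multiset.mem_cons_of_mem he))
    have hone : 1 ≤ ∑ v ∈ S, (if p v a then 1 else 0) := by
      have := Finset.single_le_sum (f := fun v => if p v a then 1 else 0)
        (fun i _ => Nat.zero_le _) hv0S
      simpa [hv0] using this
    have hsum : ∑ v ∈ S, ((a ::ₘ T).filter (p v)).card
        = (∑ v ∈ S, (T.filter (p v)).card) + ∑ v ∈ S, (if p v a then 1 else 0) := by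
      rw [← Finset.sum_add_distrib]
      refine Finset.sum_congr rfl fun v _ => ?_
      rw [Multiset.filter_cons]
      split <;> simp [add_comm]
    rw [Multiset.card_cons, hsum]
    omega

lemma mdeg_add (A B : Multiset (MEdge V)) (v : V) :
    mdeg (A + B) v = mdeg A v + mdeg B v := by
  unfold mdeg; rw [Multiset.filter_add, Multiset.card_add]

lemma card_filter_irrel {α : Type*} {p q : α → Prop} {ip : DecidablePred p}
    {iq : DecidablePred q} (s : Multiset α) (h : ∀ a, p a ↔ q a) :
    (@Multiset.filter α p ip s).card = (@Multiset.filter α q iq s).card := by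
  have hpq : p = q := funext fun a => propext (h a)
  subst hpq
  have : ip = iq := Subsingleton.elim ip iq
  subst this
  rfl

lemma card_filter_filter_le {α : Type*} {p q : α → Prop} {ip : DecidablePred p}
    {iq : DecidablePred q} (s : Multiset α) :
    (@Multiset.filter α p ip (@Multiset.filter α q iq s)).card
      ≤ (@Multiset.filter α p ip s).card := by
  exact Multiset.card_le_card
    (@Multiset.filter_le_filter _ p ip _ _ (@Multiset.filter_le _ q iq s))

lemma sum_mdeg_le [Fintype V] (M : Multiset (MEdge V)) :
    ∑ v, mdeg M v ≤ 2 * M.card := by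
  induction M using Multiset.induction with
  | empty => simp [mdeg]
  | cons a M ih =>
    have hsum : ∑ v, mdeg (a ::ₘ M) v
        = (∑ v, mdeg M v) + ∑ v, (if a.1 = v ∨ a.2.1 = v then 1 else 0) := by
      rw [← Finset.sum_add_distrib]
      refine Finset.sum_congr rfl fun v _ => ?_
      unfold mdeg
      rw [Multiset.filter_cons]
      split <;> simp [add_comm]
    have h2 : ∑ v, (if a.1 = v ∨ a.2.1 = v then (1:ℕ) else 0) ≤ 2 := by
      simp only [Finset.sum_boole, Nat.cast_id]
      have hsub : Finset.univ.filter (fun v => a.1 = v ∨ a.2.1 = v) ⊆ {a.1, a.2.1} := by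
        intro v hv
        simp only [Finset.mem_filter, Finset.mem_univ, true_and] at hv
        simp only [Finset.mem_insert, Finset.mem_singleton]
        tauto
      refine le_trans (Finset.card_le_card hsub) ?_
      exact le_trans (Finset.card_insert_le _ _) (by simp)
    rw [hsum, Multiset.card_cons]
    omega

lemma mdeg_le_card_mul [Fintype V] (E : Multiset (MEdge V)) (b : V → ℕ)
    (hpar : ∀ u v : V, (par E u v).card ≤ min (b u) (b v)) (v : V) :
    mdeg E v ≤ Fintype.card V * b v := by
  unfold mdeg
  have h := card_le_sum_filter (Finset.univ)
      (fun u e => (e.1 = v ∧ e.2.1 = u) ∨ (e.1 = u ∧ e.2.1 = v))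
      (E.filter (fun e => e.1 = v ∨ e.2.1 = v))
      (by
        intro e he
        rcases (Multiset.mem_filter.mp he).2 with h1 | h2
        · exact ⟨e.2.1, Finset.mem_univ _, Or.inl ⟨h1, rfl⟩⟩
        · exact ⟨e.1, Finset.mem_univ _, Or.inr ⟨rfl, h2⟩⟩)
  refine le_trans h (le_trans (Finset.sum_le_sum (g := fun _ => b v) (fun u _ => ?_))
    (by simp [Finset.sum_const, mul_comm]))
  refine le_trans (card_filter_filter_le E) ?_
  have hp := hpar v u
  unfold par at hp
  exact le_trans (le_of_eq (card_filter_irrel E fun a => Iff.rfl))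
    (le_trans hp (min_le_left _ _))

lemma nat_helper1 (n c k : ℕ) (h : 1 ≤ n) (h2 : c + k ≤ n * k) : c ≤ (n - 1) * k := by
  cases n with
  | zero => omega
  | succ m =>
    have : (m + 1) * k = m * k + k := by ring
    simp only [Nat.succ_sub_one]
    omega

lemma nat_helper2 (n c : ℕ) (h : 1 ≤ n) : (n - 1) * (2 * c) + c ≤ 2 * n * c := by
  cases n with
  | zero => omega
  | succ m =>
    simp only [Nat.succ_sub_one]
    nlinarith


/-- If the number of parallel edges between any two vertices is at
most `min(b_u, b_v)`, then the total number of edges satisfies `|E| ≤ 2n·|M_G|`,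
where `M_G` is a maximum-weight `b`-matching and `n` the number of vertices. -/
theorem edge_count_bound
    {V : Type*} [Fintype V]
    (W : ℕ)
    (E : Multiset (MEdge V)) (hE : ValidEdges W E)
    (b : V → ℕ) (hb : ∀ v, 1 ≤ b v)
    (hpar : ∀ u v : V, (par E u v).card ≤ min (b u) (b v))
    (M : Multiset (MEdge V)) (hM : IsBMatching E M b)
    (hmax : ∀ M', IsBMatching E M' b → mwt M' ≤ mwt M) :
    Multiset.card E ≤ 2 * Fintype.card V * Multiset.card M := by
  obtain ⟨hME, hdeg⟩ := hM
  rcases Multiset.empty_or_exists_mem E with rfl | ⟨e0, he0⟩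
  · simp
  have hn : 1 ≤ Fintype.card V := Fintype.card_pos_iff.mpr ⟨e0.1⟩
  have hEsplit : E - M + M = E := tsub_add_cancel_of_le hME
  -- Step A: every edge of E - M has a saturated endpoint
  have stepA : ∀ e ∈ E - M, b e.1 ≤ mdeg M e.1 ∨ b e.2.1 ≤ mdeg M e.2.1 := by
    intro e he
    by_contra hcon
    push_neg at hcon
    obtain ⟨h1, h2⟩ := hcon
    have heE : e ∈ E := Multiset.mem_of_le tsub_le_self he
    have hM' : IsBMatching E (e ::ₘ M) b := by
      constructor
      · have h1 : ({e} : Multiset (MEdge V)) + M ≤ (E - M) + M :=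
          add_le_add (Multiset.singleton_le.mpr he) le_rfl
        rwa [Multiset.singleton_add, hEsplit] at h1
      · intro v
        unfold mdeg
        rw [Multiset.filter_cons]
        by_cases hv : e.1 = v ∨ e.2.1 = v
        · have : mdeg M v < b v := by
            rcases hv with hv | hv <;> rw [← hv] <;> [exact h1; exact h2]
          simp only [if_pos hv, Multiset.card_add, Multiset.card_singleton]
          unfold mdeg at this
          omega
        · simpa [if_neg hv, mdeg] using hdeg v
    have hle := hmax _ hM'
    have : mwt (e ::ₘ M) = ewt e + mwt M := by
      unfold mwt; rw [Multiset.map_cons, Multiset.sum_cons]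
    have hw : 1 ≤ ewt e := (hE e heE).2.1
    omega
  -- saturated vertices
  set S : Finset V := Finset.univ.filter (fun v => b v ≤ mdeg M v) with hS
  -- Step B
  have stepB : (E - M).card ≤ ∑ v ∈ S, mdeg (E - M) v := by
    refine le_trans (card_le_sum_filter S (fun v e => e.1 = v ∨ e.2.1 = v) (E - M) ?_)
      (le_of_eq (Finset.sum_congr rfl fun v _ => ?_))
    · intro e he
      rcases stepA e he with h | h
      · exact ⟨e.1, by simp [hS, h], Or.inl rfl⟩
      · exact ⟨e.2.1, by simp [hS, h], Or.inr rfl⟩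
    · unfold mdeg
      exact card_filter_irrel _ (fun a => Iff.rfl)
  -- Step C: per saturated vertex
  have stepC : ∀ v ∈ S, mdeg (E - M) v ≤ (Fintype.card V - 1) * b v := by
    intro v hv
    have hvS : b v ≤ mdeg M v := by simpa [hS] using hv
    have hEv : mdeg (E - M) v + mdeg M v = mdeg E v := by
      rw [← mdeg_add, hEsplit]
    have hEb : mdeg E v ≤ Fintype.card V * b v := mdeg_le_card_mul E b hpar v
    exact nat_helper1 _ _ _ hn (by omega)
  have hSb : ∑ v ∈ S, b v ≤ 2 * M.card := by
    calc ∑ v ∈ S, b v ≤ ∑ v ∈ S, mdeg M v := by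
          refine Finset.sum_le_sum fun v hv => by simpa [hS] using hv
      _ ≤ ∑ v, mdeg M v := Finset.sum_le_sum_of_subset (Finset.subset_univ S)
      _ ≤ 2 * M.card := sum_mdeg_le M
  have hEM : (E - M).card ≤ (Fintype.card V - 1) * (2 * M.card) := by
    calc (E - M).card ≤ ∑ v ∈ S, mdeg (E - M) v := stepB
      _ ≤ ∑ v ∈ S, (Fintype.card V - 1) * b v := Finset.sum_le_sum stepC
      _ = (Fintype.card V - 1) * ∑ v ∈ S, b v := by rw [Finset.mul_sum]
      _ ≤ (Fintype.card V - 1) * (2 * M.card) := Nat.mul_le_mul_left _ hSb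
  have hcard : E.card = (E - M).card + M.card := by
    rw [← hEsplit, Multiset.card_add]; rw [hEsplit]
  have hfin := nat_helper2 (Fintype.card V) M.card hn
  omega
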